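/- The shift graph on pairs {(i,j) : 1 ≤ i < j ≤ m}, with (i,j) adjacent to (j,k), has chromatic number greater than M whenever m > 2^M. -/

import Mathlib

/-- The shift graph `S_m` has vertex set `{(i,j) : i < j ≤ m}`, with distinct
vertices `(i,j)`, `(i',j')` adjacent iff `j = i'` or `i = j'`. If `m > 2^M`,
its chromatic number exceeds `M`. -/
theorem stmt5 (m M : ℕ) (hm : 2 ^ M < m)
    (G : SimpleGraph {p : Fin m × Fin m // p.1 < p.2})
    (hG : ∀ u v : {p : Fin m × Fin m // p.1 < p.2},
      G.Adj u v ↔ (u ≠ v ∧ (u.val.2 = v.val.1 ∨ u.val.1 = v.val.2))) :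
    (M : ℕ∞) < G.chromaticNumber := by
  classical
  rw [lt_iff_not_ge]
  intro hle
  rw [SimpleGraph.chromaticNumber_le_iff_colorable] at hle
  obtain ⟨C⟩ := hle
  -- φ i = set of colors used on edges (i, j) with i < j
  set φ : Fin m → Finset (Fin M) := fun i =>
    Finset.univ.filter (fun c => ∃ j : Fin m, ∃ h : i < j, C ⟨(i, j), h⟩ = c)
    with hφ
  have key : ∀ i k : Fin m, i < k → φ i ≠ φ k := by
    intro i k hlt hik
    have hc : C ⟨(i, k), hlt⟩ ∈ φ i := by
      simp only [hφ, Finset.mem_filter, Finset.mem_univ, true_and]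
      exact ⟨k, hlt, rfl⟩
    rw [hik] at hc
    simp only [hφ, Finset.mem_filter, Finset.mem_univ, true_and] at hc
    obtain ⟨j, hj, hcj⟩ := hc
    have hadj : G.Adj ⟨(i, k), hlt⟩ ⟨(k, j), hj⟩ := by
      rw [hG]
      refine ⟨?_, Or.inl rfl⟩
      intro h
      have : i = k := congrArg (fun p => p.val.1) h
      exact absurd this hlt.ne
    exact C.valid hadj (by rw [hcj])
  have hinj : Function.Injective φ := by
    intro i k hik
    by_contra hne
    rcases lt_or_gt_of_ne hne with h | h
    · exact key i k h hik
    · exact key k i h hik.symm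
  have := Fintype.card_le_of_injective φ hinj
  simp only [Fintype.card_fin, Fintype.card_finset] at this
  omega
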